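/- Let m, n be nonzero integers with |m| < |n|, and let ℓ be a standard line in BS(m,n). Then ℓ is an a-line (i.e., a left coset of ⟨a⟩) if and only if there exists a finite set S of standard lines of BS(m,n) such that: every member of S is disjoint from ℓ; for every member s of S there exists a standard line that intersects both s and ℓ; and every standard line that intersects ℓ and is distinct from ℓ also intersects some member of S. -/

import Mathlib

/-- affine maps x ↦ αx + β over ℚ as a group -/
@[ext] structure Aff where
  slope : ℚˣ
  trans : ℚ

namespace Aff

instance : Mul Aff := ⟨fun f g => ⟨f.slope * g.slope, f.trans + (f.slope : ℚ) * g.trans⟩⟩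
instance : One Aff := ⟨⟨1, 0⟩⟩
instance : Inv Aff := ⟨fun f => ⟨f.slope⁻¹, -(((f.slope⁻¹ : ℚˣ) : ℚ) * f.trans)⟩⟩

@[simp] lemma mul_slope (f g : Aff) : (f * g).slope = f.slope * g.slope := rfl
@[simp] lemma mul_trans (f g : Aff) : (f * g).trans = f.trans + (f.slope : ℚ) * g.trans := rfl
@[simp] lemma one_slope : (1 : Aff).slope = 1 := rfl
@[simp] lemma one_trans : (1 : Aff).trans = 0 := rfl
@[simp] lemma inv_slope (f : Aff) : f⁻¹.slope = f.slope⁻¹ := rfl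
@[simp] lemma inv_trans (f : Aff) : f⁻¹.trans = -(((f.slope⁻¹ : ℚˣ) : ℚ) * f.trans) := rfl

instance : Group Aff where
  mul_assoc f g h := by ext <;> simp [mul_assoc] <;> ring
  one_mul f := by ext <;> simp
  mul_one f := by ext <;> simp
  inv_mul_cancel f := by
    ext <;> simp

@[simp] lemma mk_slope (u : ℚˣ) (q : ℚ) : (Aff.mk u q).slope = u := rfl
@[simp] lemma mk_trans (u : ℚˣ) (q : ℚ) : (Aff.mk u q).trans = q := rfl

def T : Multiplicative ℚ →* Aff :=
  MonoidHom.mk' (fun q => ⟨1, q.toAdd⟩) (by intro x y; ext <;> simp)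

def U : ℚˣ →* Aff :=
  MonoidHom.mk' (fun u => ⟨u, 0⟩) (by intro x y; ext <;> simp)

lemma trans_zpow (q : ℚ) (i : ℤ) : (Aff.mk 1 q) ^ i = Aff.mk 1 (i * q) := by
  have h := (map_zpow T (Multiplicative.ofAdd q) i).symm
  simpa [T, toAdd_zpow, zsmul_eq_mul] using h

lemma unit_zpow (u : ℚˣ) (i : ℤ) : (Aff.mk u 0) ^ i = Aff.mk (u ^ i) 0 := by
  simpa [U] using (map_zpow U u i).symm

end Aff


/-- The single defining relator `t a^m t⁻¹ (a^n)⁻¹` of the Baumslag–Solitar group `BS(m,n)`,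
as an element of the free group on `Bool`, where `false` stands for the generator `a` and
`true` for the generator `t`. -/
def bsRel (m n : ℤ) : FreeGroup Bool :=
  FreeGroup.of true * FreeGroup.of false ^ m * (FreeGroup.of true)⁻¹ *
    (FreeGroup.of false ^ n)⁻¹

/-- The Baumslag–Solitar group `BS(m,n) = ⟨a, t ∣ t a^m t⁻¹ = a^n⟩`. -/
abbrev BS (m n : ℤ) : Type := PresentedGroup ({bsRel m n} : Set (FreeGroup Bool))

/-- The generator `a` of `BS(m,n)`. -/
def BS.a (m n : ℤ) : BS m n := PresentedGroup.of false

/-- The generator `t` (stable letter) of `BS(m,n)`. -/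
def BS.t (m n : ℤ) : BS m n := PresentedGroup.of true

/-- The `a`-line through `g` in `BS(m,n)`: the left coset `g⟨a⟩`. -/
def aLine (m n : ℤ) (g : BS m n) : Set (BS m n) := {x | ∃ i : ℤ, x = g * BS.a m n ^ i}

/-- The `t`-line through `g` in `BS(m,n)`: the left coset `g⟨t⟩`. -/
def tLine (m n : ℤ) (g : BS m n) : Set (BS m n) := {x | ∃ i : ℤ, x = g * BS.t m n ^ i}

/-- A standard line in `BS(m,n)` is an `a`-line or a `t`-line. -/
def IsStandardLine (m n : ℤ) (ℓ : Set (BS m n)) : Prop :=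
  (∃ g, ℓ = aLine m n g) ∨ (∃ g, ℓ = tLine m n g)

/-- A map `BS(m,n) → BS(m',n')` is line-preserving if the image of every standard line is a
standard line. -/
def LinePreserving {m n m' n' : ℤ} (φ : BS m n → BS m' n') : Prop :=
  ∀ ℓ : Set (BS m n), IsStandardLine m n ℓ → IsStandardLine m' n' (φ '' ℓ)

namespace BSaux

/-- the t-exponent homomorphism -/
def tau (m n : ℤ) : BS m n →* Multiplicative ℤ :=
  PresentedGroup.toGroup (f := fun b => if b then Multiplicative.ofAdd (1 : ℤ) else 1)
    (by
      intro r hr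
      rw [Set.mem_singleton_iff] at hr
      subst hr
      simp [bsRel, map_mul, map_inv, map_zpow, FreeGroup.lift_apply_of])

@[simp] lemma tau_a (m n : ℤ) : tau m n (BS.a m n) = 1 := by
  simp [tau, BS.a, PresentedGroup.toGroup.of]

@[simp] lemma tau_t (m n : ℤ) : tau m n (BS.t m n) = Multiplicative.ofAdd (1 : ℤ) := by
  simp [tau, BS.t, PresentedGroup.toGroup.of]

/-- the slope of t in the affine representation -/
def lam (m n : ℤ) (hm : (m : ℚ) ≠ 0) (hn : (n : ℚ) ≠ 0) : ℚˣ :=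
  Units.mk0 ((n : ℚ) / m) (div_ne_zero hn hm)

/-- the affine representation of BS(m,n) -/
def phi (m n : ℤ) (hm : (m : ℚ) ≠ 0) (hn : (n : ℚ) ≠ 0) : BS m n →* Aff :=
  PresentedGroup.toGroup (f := fun b => if b then Aff.mk (lam m n hm hn) 0 else Aff.mk 1 1)
    (by
      intro r hr
      rw [Set.mem_singleton_iff] at hr
      subst hr
      simp only [bsRel, map_mul, map_inv, map_zpow, FreeGroup.lift_apply_of, if_true, if_false,
        Bool.false_eq_true, ite_false, ite_true]
      rw [Aff.trans_zpow, Aff.trans_zpow]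
      ext
      · simp [lam]
      · simp [lam]
        field_simp
        ring)

@[simp] lemma phi_a (m n : ℤ) (hm : (m : ℚ) ≠ 0) (hn : (n : ℚ) ≠ 0) :
    phi m n hm hn (BS.a m n) = Aff.mk 1 1 := by
  simp [phi, BS.a, PresentedGroup.toGroup.of]

@[simp] lemma phi_t (m n : ℤ) (hm : (m : ℚ) ≠ 0) (hn : (n : ℚ) ≠ 0) :
    phi m n hm hn (BS.t m n) = Aff.mk (lam m n hm hn) 0 := by
  simp [phi, BS.t, PresentedGroup.toGroup.of]

lemma phi_a_zpow (m n : ℤ) (hm : (m : ℚ) ≠ 0) (hn : (n : ℚ) ≠ 0) (i : ℤ) :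
    phi m n hm hn (BS.a m n ^ i) = Aff.mk 1 i := by
  rw [map_zpow, phi_a, Aff.trans_zpow, mul_one]

lemma phi_t_zpow (m n : ℤ) (hm : (m : ℚ) ≠ 0) (hn : (n : ℚ) ≠ 0) (k : ℤ) :
    phi m n hm hn (BS.t m n ^ k) = Aff.mk (lam m n hm hn ^ k) 0 := by
  rw [map_zpow, phi_t, Aff.unit_zpow]

/-- the defining relation holds in BS(m,n) -/
lemma bs_rel (m n : ℤ) :
    BS.t m n * BS.a m n ^ m * (BS.t m n)⁻¹ * (BS.a m n ^ n)⁻¹ = 1 := by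
  have h1 : PresentedGroup.mk {bsRel m n} (bsRel m n) = 1 :=
    (QuotientGroup.eq_one_iff _).mpr
      (Subgroup.subset_normalClosure (Set.mem_singleton _))
  have h2 : (PresentedGroup.mk {bsRel m n} (FreeGroup.of true * FreeGroup.of false ^ m *
      (FreeGroup.of true)⁻¹ * (FreeGroup.of false ^ n)⁻¹) : BS m n) = 1 := h1
  rw [map_mul, map_mul, map_mul, map_inv, map_inv, map_zpow, map_zpow] at h2
  exact h2

lemma a_pow_n_conj (m n : ℤ) (d : ℤ) :
    BS.a m n ^ (n * d) = BS.t m n * BS.a m n ^ (m * d) * (BS.t m n)⁻¹ := by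
  have h := bs_rel m n
  have h2 : BS.t m n * BS.a m n ^ m * (BS.t m n)⁻¹ = BS.a m n ^ n := by
    have := mul_eq_one_iff_eq_inv.mp h
    simpa using this
  calc BS.a m n ^ (n * d) = (BS.a m n ^ n) ^ d := by rw [zpow_mul]
    _ = (BS.t m n * BS.a m n ^ m * (BS.t m n)⁻¹) ^ d := by rw [h2]
    _ = BS.t m n * (BS.a m n ^ m) ^ d * (BS.t m n)⁻¹ := conj_zpow
    _ = BS.t m n * BS.a m n ^ (m * d) * (BS.t m n)⁻¹ := by rw [zpow_mul]

end BSaux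

lemma abs_zpow_rat (x : ℚ) (k : ℤ) : |x ^ k| = |x| ^ k := by
  rcases k with p | p
  · simp [abs_pow]
  · simp [zpow_negSucc, abs_inv, abs_pow]

namespace BSaux

lemma aLine_eq (m n : ℤ) {g h : BS m n}
    (H : (aLine m n g ∩ aLine m n h).Nonempty) : aLine m n g = aLine m n h := by
  obtain ⟨x, ⟨i, hx⟩, ⟨j, hj⟩⟩ := H
  have hg : g = h * BS.a m n ^ (j - i) := by
    have h1 : g * BS.a m n ^ i = h * BS.a m n ^ j := by rw [← hx, ← hj]
    have : g = h * BS.a m n ^ j * (BS.a m n ^ i)⁻¹ := by rw [← h1]; group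
    rw [this, zpow_sub, mul_assoc]
  ext y
  simp only [aLine, Set.mem_setOf_eq]
  constructor
  · rintro ⟨p, rfl⟩; exact ⟨j - i + p, by rw [hg, zpow_add]; group⟩
  · rintro ⟨p, rfl⟩; exact ⟨i - j + p, by rw [hg]; group⟩

lemma a_zpow_mul_t (m n : ℤ) (i : ℤ) :
    ∃ c : ℤ, BS.a m n ^ i * BS.t m n = BS.a m n ^ (i % |n|) * BS.t m n * BS.a m n ^ c := by
  have hsplit : i % |n| + |n| * (i / |n|) = i := Int.emod_add_mul_ediv i |n|
  have key : ∀ d : ℤ, BS.a m n ^ (n * d) * BS.t m n = BS.t m n * BS.a m n ^ (m * d) := by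
    intro d
    rw [a_pow_n_conj m n d]
    group
  obtain ⟨d, hd⟩ : ∃ d : ℤ, n * d = |n| * (i / |n|) := by
    rcases abs_cases n with ⟨h1, -⟩ | ⟨h1, -⟩
    · exact ⟨i / |n|, by rw [h1]⟩
    · exact ⟨-(i / |n|), by rw [h1]; ring⟩
  refine ⟨m * d, ?_⟩
  have hpow : BS.a m n ^ i = BS.a m n ^ (i % |n|) * BS.a m n ^ (n * d) := by
    rw [← zpow_add]
    congr 1
    rw [hd]
    linarith [hsplit]
  rw [hpow, mul_assoc, key, ← mul_assoc]

end BSaux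

/-- In `BS(m,n)` with `0 ≠ |m| < |n|`, a standard line `ℓ` is an `a`-line
if and only if there is a finite set `S` of standard lines, each disjoint from `ℓ` but joined
to `ℓ` by some standard line, such that every standard line distinct from `ℓ` that intersects
`ℓ` also intersects a member of `S`. -/
theorem aLine_characterization (m n : ℤ) (hm : m ≠ 0) (hn : n ≠ 0) (hmn : |m| < |n|)
    (ℓ : Set (BS m n)) (hℓ : IsStandardLine m n ℓ) :
    (∃ g, ℓ = aLine m n g) ↔
      ∃ S : Set (Set (BS m n)), S.Finite ∧ (∀ s ∈ S, IsStandardLine m n s) ∧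
        (∀ s ∈ S, s ∩ ℓ = ∅) ∧
        (∀ s ∈ S, ∃ ℓ' : Set (BS m n), IsStandardLine m n ℓ' ∧
          (ℓ' ∩ s).Nonempty ∧ (ℓ' ∩ ℓ).Nonempty) ∧
        (∀ ℓ' : Set (BS m n), IsStandardLine m n ℓ' → ℓ' ≠ ℓ → (ℓ' ∩ ℓ).Nonempty →
          ∃ s ∈ S, (ℓ' ∩ s).Nonempty) := by
  have hmQ : (m : ℚ) ≠ 0 := Int.cast_ne_zero.mpr hm
  have hnQ : (n : ℚ) ≠ 0 := Int.cast_ne_zero.mpr hn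
  set a := BS.a m n with ha
  set t := BS.t m n with ht
  constructor
  · rintro ⟨g, rfl⟩
    refine ⟨(fun r : ℤ => aLine m n (g * a ^ r * t)) '' (Set.Ico 0 |n|),
      (Set.finite_Ico _ _).image _, ?_, ?_, ?_, ?_⟩
    · rintro s ⟨r, -, rfl⟩; exact Or.inl ⟨_, rfl⟩
    · rintro s ⟨r, -, rfl⟩
      rw [Set.eq_empty_iff_forall_notMem]
      rintro x ⟨⟨p, rfl⟩, ⟨j, hj⟩⟩
      have h2 := congrArg (fun x => ((BSaux.tau m n) x).toAdd) hj
      simp [map_mul, map_zpow, toAdd_zpow, ha, ht] at h2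
    · rintro s ⟨r, -, rfl⟩
      exact ⟨tLine m n (g * a ^ r), Or.inr ⟨_, rfl⟩,
        ⟨g * a ^ r * t, ⟨1, by rw [zpow_one]⟩, ⟨0, by rw [zpow_zero, mul_one]⟩⟩,
        ⟨g * a ^ r, ⟨0, by rw [zpow_zero, mul_one]⟩, ⟨r, rfl⟩⟩⟩
    · rintro ℓ' hstd' hne ⟨x, hx', hx⟩
      rcases hstd' with ⟨h, rfl⟩ | ⟨h, rfl⟩
      · exact absurd (BSaux.aLine_eq m n ⟨x, hx', hx⟩) hne
      · obtain ⟨j, rfl⟩ := hx'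
        obtain ⟨i, hi⟩ := hx
        obtain ⟨c, hc⟩ := BSaux.a_zpow_mul_t m n i
        have hNpos : 0 < |n| := abs_pos.mpr hn
        refine ⟨aLine m n (g * a ^ (i % |n|) * t),
          ⟨i % |n|, ⟨Int.emod_nonneg i hNpos.ne', Int.emod_lt_of_pos i hNpos⟩, rfl⟩,
          h * t ^ (j + 1), ⟨j + 1, rfl⟩, c, ?_⟩
        have h1 : h * t ^ (j + 1) = g * a ^ i * t := by
          rw [zpow_add_one, ← mul_assoc, hi]
        rw [h1, mul_assoc, hc]
        simp [mul_assoc, ha, ht]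
  · rintro ⟨S, hfin, hstd, hdisj, -, hcov⟩
    rcases hℓ with hA' | ⟨g, rfl⟩
    · exact hA'
    exfalso
    set φ := BSaux.phi m n hmQ hnQ with hφ
    set lam := BSaux.lam m n hmQ hnQ with hlamdef
    have hlam : 1 < |(lam : ℚ)| := by
      have : (lam : ℚ) = (n : ℚ) / m := rfl
      rw [this, abs_div, one_lt_div (abs_pos.mpr hmQ), ← Int.cast_abs, ← Int.cast_abs]
      exact_mod_cast hmn
    have hA : ∀ k : ℤ, ∃ s ∈ S, ((aLine m n (g * t ^ k)) ∩ s).Nonempty := by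
      intro k
      apply hcov _ (Or.inl ⟨_, rfl⟩)
      · intro hEq
        have hmem : g * t ^ k * a ∈ tLine m n g := hEq ▸ ⟨1, by rw [zpow_one]⟩
        obtain ⟨p, hp⟩ := hmem
        have h3 := congrArg (fun x => (φ x).trans) hp
        simp [map_mul, map_zpow, BSaux.phi_a, BSaux.phi_t, Aff.unit_zpow, ha, ht, hφ] at h3
        exact zpow_ne_zero k (Units.ne_zero (BSaux.lam m n hmQ hnQ)) (by exact_mod_cast h3)
      · exact ⟨g * t ^ k, ⟨0, by rw [zpow_zero, mul_one]⟩, ⟨k, rfl⟩⟩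
    have hB : ∀ s ∈ S, ∃ B : ℤ, ∀ k : ℤ, ((aLine m n (g * t ^ k)) ∩ s).Nonempty → k ≤ B := by
      intro s hs
      rcases hstd s hs with ⟨h, rfl⟩ | ⟨h, rfl⟩
      · refine ⟨((BSaux.tau m n) h).toAdd - ((BSaux.tau m n) g).toAdd, ?_⟩
        rintro k ⟨x, ⟨i, rfl⟩, ⟨j, hj⟩⟩
        have h2 := congrArg (fun x => ((BSaux.tau m n) x).toAdd) hj
        simp [map_mul, map_zpow, toAdd_zpow, ha, ht] at h2
        omega
      · have hd := hdisj _ hs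
        set c : ℚ := (((φ h).trans - (φ g).trans) / ((φ g).slope : ℚ)) with hcdef
        obtain ⟨N, hN⟩ := pow_unbounded_of_one_lt |c| hlam
        refine ⟨N, ?_⟩
        rintro k ⟨x, ⟨i, rfl⟩, ⟨j, hj⟩⟩
        by_contra hk
        push_neg at hk
        have h3 := congrArg (fun x => (φ x).trans) hj
        simp [map_mul, map_zpow, BSaux.phi_a, BSaux.phi_t, Aff.unit_zpow, Aff.trans_zpow,
          Units.val_zpow_eq_zpow_val, ha, ht, hφ] at h3
        have hi0 : i ≠ 0 := by
          rintro rfl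
          have hx : g * t ^ k ∈ tLine m n h ∩ tLine m n g := by
            constructor
            · exact ⟨j, by rw [← hj, zpow_zero, mul_one]⟩
            · exact ⟨k, rfl⟩
          rw [hd] at hx
          exact hx
        have key : (i : ℚ) * ((lam : ℚ)) ^ k = c := by
          rw [hcdef]
          field_simp
          linarith [h3]
        have h1i : (1 : ℚ) ≤ |(i : ℚ)| := by
          have := Int.one_le_abs hi0
          rw [← Int.cast_abs]
          exact_mod_cast this
        have hchain : |(lam : ℚ)| ^ k ≤ |c| := by
          calc |(lam : ℚ)| ^ k = 1 * |(lam : ℚ)| ^ k := (one_mul _).symm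
            _ ≤ |(i : ℚ)| * |(lam : ℚ)| ^ k := by
                apply mul_le_mul_of_nonneg_right h1i (by positivity)
            _ = |(i : ℚ) * (lam : ℚ) ^ k| := by
                rw [abs_mul, abs_zpow_rat]
            _ = |c| := by rw [key]
        have hfin2 : |(lam : ℚ)| ^ (N : ℤ) < |(lam : ℚ)| ^ k :=
          (zpow_lt_zpow_iff_right₀ hlam).mpr hk
        rw [zpow_natCast] at hfin2
        linarith
    choose! B hB' using hB
    obtain ⟨s₀, hs₀, -⟩ := hA 0
    have hFne : hfin.toFinset.Nonempty := ⟨s₀, hfin.mem_toFinset.mpr hs₀⟩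
    set M := hfin.toFinset.sup' hFne B with hM
    obtain ⟨s, hsS, hint⟩ := hA (M + 1)
    have h1 : M + 1 ≤ B s := hB' s hsS _ hint
    have h2 : B s ≤ M := Finset.le_sup' B (hfin.mem_toFinset.mpr hsS)
    omega
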